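/- Let R be a connected topological space, s ∈ R, and θ₁, θ₂, θ₃, θ₄ : R → ℝP¹ be continuous functions such that θ₁(s), θ₂(s), θ₃(s), θ₄(s) are in cyclic order [θ₁(s), θ₂(s), θ₃(s), θ₄(s)], and such that θ₁ ≠ θ₂, θ₂ ≠ θ₃, θ₃ ≠ θ₄, θ₄ ≠ θ₁ pointwise on all of R. Then [θ₁(r), θ₂(r), θ₃(r), θ₄(r)] holds for every r ∈ R; in particular θ₁(r) ≠ θ₃(r) and θ₂(r) ≠ θ₄(r) for all r ∈ R. -/

import Mathlib

open OnePoint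
abbrev RP1 := OnePoint ℝ

/-- Strict cyclic order on the real projective line `ℝ ∪ {∞}`, extending
the usual order on `ℝ`: `[a,b,c]` for reals iff `a<b<c` or `b<c<a` or `c<a<b`,
and `[a,b,∞]` iff `a<b` (plus cyclic permutations). -/
def sbtw' (x y z : RP1) : Prop :=
  (∃ a b c : ℝ, x = (a : RP1) ∧ y = (b : RP1) ∧ z = (c : RP1) ∧
    ((a < b ∧ b < c) ∨ (b < c ∧ c < a) ∨ (c < a ∧ a < b))) ∨
  (∃ a b : ℝ, x = (a : RP1) ∧ y = (b : RP1) ∧ z = ∞ ∧ a < b) ∨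
  (∃ a b : ℝ, x = (b : RP1) ∧ y = ∞ ∧ z = (a : RP1) ∧ a < b) ∨
  (∃ a b : ℝ, x = ∞ ∧ y = (a : RP1) ∧ z = (b : RP1) ∧ a < b)

open Filter Set Topology

@[simp] lemma sbtw'_rrr {a b c : ℝ} : sbtw' a b c ↔
    ((a < b ∧ b < c) ∨ (b < c ∧ c < a) ∨ (c < a ∧ a < b)) := by
  simp [sbtw', OnePoint.coe_eq_coe, (OnePoint.infty_ne_coe _).symm]
@[simp] lemma sbtw'_rri {a b : ℝ} : sbtw' a b ∞ ↔ a < b := by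
  simp [sbtw', OnePoint.coe_eq_coe, (OnePoint.infty_ne_coe _).symm, OnePoint.infty_ne_coe]
@[simp] lemma sbtw'_rir {a b : ℝ} : sbtw' a ∞ b ↔ b < a := by
  simp [sbtw', OnePoint.coe_eq_coe, (OnePoint.infty_ne_coe _).symm, OnePoint.infty_ne_coe]
@[simp] lemma sbtw'_irr {a b : ℝ} : sbtw' ∞ a b ↔ a < b := by
  simp [sbtw', OnePoint.coe_eq_coe, (OnePoint.infty_ne_coe _).symm, OnePoint.infty_ne_coe]
@[simp] lemma sbtw'_iix {y : RP1} : ¬ sbtw' ∞ ∞ y := by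
  simp [sbtw', OnePoint.infty_ne_coe]
@[simp] lemma sbtw'_ixi {y : RP1} : ¬ sbtw' ∞ y ∞ := by
  simp [sbtw', OnePoint.infty_ne_coe]
@[simp] lemma sbtw'_xii {y : RP1} : ¬ sbtw' y ∞ ∞ := by
  simp [sbtw', OnePoint.infty_ne_coe]

lemma sbtw'_ne {x y z : RP1} (h : sbtw' x y z) : x ≠ y ∧ y ≠ z ∧ x ≠ z := by
  induction x using OnePoint.rec <;> induction y using OnePoint.rec <;>
    induction z using OnePoint.rec <;>
    simp only [sbtw'_rrr, sbtw'_rri, sbtw'_rir, sbtw'_irr, sbtw'_iix, sbtw'_ixi, sbtw'_xii] at h <;>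
    simp only [ne_eq, OnePoint.coe_eq_coe, OnePoint.infty_ne_coe, (OnePoint.infty_ne_coe _).symm,
      not_false_eq_true, true_and, and_true] <;>
  first
  | exact h.elim
  | (refine ⟨?_, ?_⟩ <;> rintro rfl <;>
      rcases h with ⟨h1,h2⟩|⟨h1,h2⟩|⟨h1,h2⟩ <;> linarith)
  | (rintro rfl; exact lt_irrefl _ h)
  | (refine ⟨?_,?_,?_⟩ <;> rintro rfl <;>
      rcases h with ⟨h1,h2⟩|⟨h1,h2⟩|⟨h1,h2⟩ <;> linarith)

lemma sbtw'_asymm {x y z : RP1} (h : sbtw' x y z) : ¬ sbtw' x z y := by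
  induction x using OnePoint.rec <;> induction y using OnePoint.rec <;>
    induction z using OnePoint.rec <;>
    simp only [sbtw'_rrr, sbtw'_rri, sbtw'_rir, sbtw'_irr, sbtw'_iix, sbtw'_ixi, sbtw'_xii] at h ⊢ <;>
  first
  | exact h.elim
  | exact not_not_intro h
  | (intro g; try rcases h with ⟨h1,h2⟩|⟨h1,h2⟩|⟨h1,h2⟩) <;>
      (try rcases g with ⟨g1,g2⟩|⟨g1,g2⟩|⟨g1,g2⟩) <;> linarith

lemma sbtw'_cyclic {x y z : RP1} (h : sbtw' x y z) : sbtw' y z x := by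
  induction x using OnePoint.rec <;> induction y using OnePoint.rec <;>
    induction z using OnePoint.rec <;>
    simp only [sbtw'_rrr, sbtw'_rri, sbtw'_rir, sbtw'_irr, sbtw'_iix, sbtw'_ixi, sbtw'_xii] at h ⊢ <;>
  tauto

lemma sbtw'_total {x y z : RP1} (hxy : x ≠ y) (hyz : y ≠ z) (hxz : x ≠ z) :
    sbtw' x y z ∨ sbtw' x z y := by
  induction x using OnePoint.rec <;> induction y using OnePoint.rec <;>
    induction z using OnePoint.rec <;>
    simp only [ne_eq, OnePoint.coe_eq_coe, OnePoint.infty_ne_coe, not_false_eq_true,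
      not_true_eq_false] at hxy hyz hxz <;>
    simp only [sbtw'_rrr, sbtw'_rri, sbtw'_rir, sbtw'_irr, sbtw'_iix, sbtw'_ixi, sbtw'_xii] <;>
  first
  | exact hxy.elim
  | exact hyz.elim
  | exact hxz.elim
  | (rename_i a b; rcases lt_trichotomy a b with h|h|h <;> simp_all) <;> tauto
  | (rename_i a b c
     rcases lt_trichotomy a b with h|h|h <;> rcases lt_trichotomy b c with g|g|g <;>
       rcases lt_trichotomy a c with f|f|f <;> simp_all <;> tauto)

def cIoo (l u : ℝ) : Set RP1 := (fun t : ℝ => (t : RP1)) '' Set.Ioo l u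
def nbig (M : ℝ) : Set RP1 := {∞} ∪ (fun t : ℝ => (t : RP1)) '' {t | M < |t|}

lemma cIoo_mem_nhds {l u a : ℝ} (h1 : l < a) (h2 : a < u) : cIoo l u ∈ 𝓝 ((a : RP1)) :=
  ((OnePoint.isOpenEmbedding_coe.isOpenMap _ isOpen_Ioo).mem_nhds ⟨a, ⟨h1, h2⟩, rfl⟩)

lemma mem_cIoo {w : RP1} {l u : ℝ} (h : w ∈ cIoo l u) : ∃ t : ℝ, l < t ∧ t < u ∧ w = (t : RP1) := by
  rcases h with ⟨t, ht, rfl⟩; exact ⟨t, ht.1, ht.2, rfl⟩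

lemma nbig_mem_nhds (M : ℝ) : nbig M ∈ 𝓝 (∞ : RP1) := by
  rw [OnePoint.nhds_infty_eq]
  refine Filter.mem_sup.2 ⟨?_, ?_⟩
  · rw [Filter.mem_map]
    have : {t : ℝ | M < |t|} ∈ coclosedCompact ℝ := by
      rw [Filter.coclosedCompact_eq_cocompact, cocompact_eq_atBot_atTop]
      refine Filter.mem_sup.2 ⟨?_, ?_⟩
      · filter_upwards [Filter.Iio_mem_atBot (-M)] with t ht
        have : M < -t := by have : t < -M := ht; linarith
        show M < |t|
        rw [lt_abs]; right; exact this
      · filter_upwards [Filter.Ioi_mem_atTop M] with t ht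
        show M < |t|
        rw [lt_abs]; left; exact ht
    refine Filter.mem_of_superset this ?_
    intro t ht
    exact Or.inr ⟨t, ht, rfl⟩
  · simp [nbig]

lemma mem_nbig {w : RP1} {M : ℝ} (h : w ∈ nbig M) :
    w = ∞ ∨ ∃ t : ℝ, (t < -M ∨ M < t) ∧ w = (t : RP1) := by
  rcases h with h | ⟨t, ht, rfl⟩
  · exact Or.inl h
  · refine Or.inr ⟨t, ?_, rfl⟩
    have ht' : M < |t| := ht
    rcases (lt_abs.1 ht') with h | h
    · right; exact h
    · left; linarith
lemma chain (a b c : ℝ) (hab : a < b) (hbc : b < c) :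
    ∃ U ∈ 𝓝 ((a : RP1)), ∃ V ∈ 𝓝 ((b : RP1)), ∃ W ∈ 𝓝 ((c : RP1)),
      ∀ x' ∈ U, ∀ y' ∈ V, ∀ z' ∈ W, ∃ a' b' c' : ℝ,
        x' = (a' : RP1) ∧ y' = (b' : RP1) ∧ z' = (c' : RP1) ∧ a' < b' ∧ b' < c' := by
  refine ⟨cIoo (a-1) ((a+b)/2), cIoo_mem_nhds (by linarith) (by linarith),
    cIoo ((a+b)/2) ((b+c)/2), cIoo_mem_nhds (by linarith) (by linarith),
    cIoo ((b+c)/2) (c+1), cIoo_mem_nhds (by linarith) (by linarith), ?_⟩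
  intro x' hx y' hy z' hz
  obtain ⟨a', ha1, ha2, rfl⟩ := mem_cIoo hx
  obtain ⟨b', hb1, hb2, rfl⟩ := mem_cIoo hy
  obtain ⟨c', hc1, hc2, rfl⟩ := mem_cIoo hz
  exact ⟨a', b', c', rfl, rfl, rfl, by linarith, by linarith⟩

lemma sbtw'_stable {x y z : RP1} (h : sbtw' x y z) :
    ∃ U ∈ 𝓝 x, ∃ V ∈ 𝓝 y, ∃ W ∈ 𝓝 z,
      ∀ x' ∈ U, ∀ y' ∈ V, ∀ z' ∈ W, sbtw' x' y' z' := by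
  rcases h with ⟨a, b, c, rfl, rfl, rfl, hp⟩ | ⟨a, b, rfl, rfl, rfl, hab⟩ |
    ⟨a, b, rfl, rfl, rfl, hab⟩ | ⟨a, b, rfl, rfl, rfl, hab⟩
  · rcases hp with ⟨h1, h2⟩ | ⟨h1, h2⟩ | ⟨h1, h2⟩
    · obtain ⟨U, hU, V, hV, W, hW, H⟩ := chain a b c h1 h2
      refine ⟨U, hU, V, hV, W, hW, ?_⟩
      intro x' hx y' hy z' hz
      obtain ⟨a', b', c', rfl, rfl, rfl, o1, o2⟩ := H x' hx y' hy z' hz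
      exact sbtw'_rrr.2 (Or.inl ⟨o1, o2⟩)
    · obtain ⟨U, hU, V, hV, W, hW, H⟩ := chain b c a h1 h2
      refine ⟨W, hW, U, hU, V, hV, ?_⟩
      intro x' hx y' hy z' hz
      obtain ⟨b', c', a', rfl, rfl, rfl, o1, o2⟩ := H y' hy z' hz x' hx
      exact sbtw'_rrr.2 (Or.inr (Or.inl ⟨o1, o2⟩))
    · obtain ⟨U, hU, V, hV, W, hW, H⟩ := chain c a b h1 h2
      refine ⟨V, hV, W, hW, U, hU, ?_⟩
      intro x' hx y' hy z' hz
      obtain ⟨c', a', b', rfl, rfl, rfl, o1, o2⟩ := H z' hz x' hx y' hy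
      exact sbtw'_rrr.2 (Or.inr (Or.inr ⟨o1, o2⟩))
  -- [a, b, ∞]
  · set m := (a+b)/2
    set M := |a| + |b| + 2
    have haM : -M < a - 1 := by
      have := abs_nonneg (b:ℝ); have := neg_abs_le a; simp only [M]; linarith
    have hbM : b + 1 < M := by
      have := abs_nonneg (a:ℝ); have := le_abs_self b; simp only [M]; linarith
    refine ⟨cIoo (a-1) m, cIoo_mem_nhds (by linarith) (by simp only [m]; linarith),
      cIoo m (b+1), cIoo_mem_nhds (by simp only [m]; linarith) (by linarith),
      nbig M, nbig_mem_nhds M, ?_⟩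
    intro x' hx y' hy z' hz
    obtain ⟨a', ha1, ha2, rfl⟩ := mem_cIoo hx
    obtain ⟨b', hb1, hb2, rfl⟩ := mem_cIoo hy
    rcases mem_nbig hz with rfl | ⟨c', hc, rfl⟩
    · exact sbtw'_rri.2 (by linarith)
    · refine sbtw'_rrr.2 ?_
      rcases hc with hc | hc
      · exact Or.inr (Or.inr ⟨by linarith, by linarith⟩)
      · exact Or.inl ⟨by linarith, by linarith⟩
  -- [b, ∞, a]  (x = b, y = ∞, z = a, a < b)
  · set m := (a+b)/2
    set M := |a| + |b| + 2
    have haM : -M < a - 1 := by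
      have := abs_nonneg (b:ℝ); have := neg_abs_le a; simp only [M]; linarith
    have hbM : b + 1 < M := by
      have := abs_nonneg (a:ℝ); have := le_abs_self b; simp only [M]; linarith
    refine ⟨cIoo m (b+1), cIoo_mem_nhds (by simp only [m]; linarith) (by linarith),
      nbig M, nbig_mem_nhds M,
      cIoo (a-1) m, cIoo_mem_nhds (by linarith) (by simp only [m]; linarith), ?_⟩
    intro x' hx y' hy z' hz
    obtain ⟨b', hb1, hb2, rfl⟩ := mem_cIoo hx
    obtain ⟨a', ha1, ha2, rfl⟩ := mem_cIoo hz
    rcases mem_nbig hy with rfl | ⟨t, ht, rfl⟩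
    · exact sbtw'_rir.2 (by linarith)
    · refine sbtw'_rrr.2 ?_
      rcases ht with ht | ht
      · exact Or.inr (Or.inl ⟨by linarith, by linarith⟩)
      · exact Or.inr (Or.inr ⟨by linarith, by linarith⟩)
  -- [∞, a, b]  (a < b)
  · set m := (a+b)/2
    set M := |a| + |b| + 2
    have haM : -M < a - 1 := by
      have := abs_nonneg (b:ℝ); have := neg_abs_le a; simp only [M]; linarith
    have hbM : b + 1 < M := by
      have := abs_nonneg (a:ℝ); have := le_abs_self b; simp only [M]; linarith
    refine ⟨nbig M, nbig_mem_nhds M,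
      cIoo (a-1) m, cIoo_mem_nhds (by linarith) (by simp only [m]; linarith),
      cIoo m (b+1), cIoo_mem_nhds (by simp only [m]; linarith) (by linarith), ?_⟩
    intro x' hx y' hy z' hz
    obtain ⟨a', ha1, ha2, rfl⟩ := mem_cIoo hy
    obtain ⟨b', hb1, hb2, rfl⟩ := mem_cIoo hz
    rcases mem_nbig hx with rfl | ⟨t, ht, rfl⟩
    · exact sbtw'_irr.2 (by linarith)
    · refine sbtw'_rrr.2 ?_
      rcases ht with ht | ht
      · exact Or.inl ⟨by linarith, by linarith⟩
      · exact Or.inr (Or.inl ⟨by linarith, by linarith⟩)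

lemma cIoo_mono {l u l' u' : ℝ} (hl : l ≤ l') (hu : u' ≤ u) : cIoo l' u' ⊆ cIoo l u := by
  rintro w ⟨t, ht, rfl⟩; exact ⟨t, ⟨by linarith [ht.1], by linarith [ht.2]⟩, rfl⟩

lemma key_real {l u : ℝ} {x1 x2 x3 x4 : RP1}
    (h1 : x1 ∈ cIoo l u) (h3 : x3 ∈ cIoo l u) (h2 : x2 ∉ cIoo l u) (h4 : x4 ∉ cIoo l u)
    (H1 : sbtw' x1 x2 x3) (H2 : sbtw' x1 x3 x4) : False := by
  obtain ⟨a, ha1, ha2, rfl⟩ := mem_cIoo h1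
  obtain ⟨c, hc1, hc2, rfl⟩ := mem_cIoo h3
  rcases lt_trichotomy a c with hac | hac | hac
  · -- use H1 : sbtw' a x2 c, get x2 ∈ (a,c) ⊆ (l,u)
    induction x2 using OnePoint.rec with
    | infty => rw [sbtw'_rir] at H1; linarith
    | coe b =>
      rcases sbtw'_rrr.1 H1 with ⟨g1, g2⟩ | ⟨g1, g2⟩ | ⟨g1, g2⟩
      · exact h2 ⟨b, ⟨by linarith, by linarith⟩, rfl⟩
      · linarith
      · linarith
  · exact (sbtw'_ne H1).2.2 (by rw [hac])
  · -- use H2 : sbtw' a c x4, get x4 ∈ (c,a) ⊆ (l,u)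
    induction x4 using OnePoint.rec with
    | infty => rw [sbtw'_rri] at H2; linarith
    | coe d =>
      rcases sbtw'_rrr.1 H2 with ⟨g1, g2⟩ | ⟨g1, g2⟩ | ⟨g1, g2⟩
      · linarith
      · exact h4 ⟨d, ⟨by linarith, by linarith⟩, rfl⟩
      · linarith

lemma key_inf {M : ℝ} {x1 x2 x3 x4 : RP1}
    (h1 : x1 ∈ nbig M) (h3 : x3 ∈ nbig M) (h2 : x2 ∈ cIoo (-M) M) (h4 : x4 ∈ cIoo (-M) M)
    (H1 : sbtw' x1 x2 x3) (H2 : sbtw' x1 x3 x4) : False := by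
  obtain ⟨b, hb1, hb2, rfl⟩ := mem_cIoo h2
  obtain ⟨d, hd1, hd2, rfl⟩ := mem_cIoo h4
  rcases mem_nbig h1 with rfl | ⟨a, ha, rfl⟩ <;> rcases mem_nbig h3 with rfl | ⟨c, hc, rfl⟩
  · exact sbtw'_ixi H1
  · rw [sbtw'_irr] at H1
    rw [sbtw'_irr] at H2
    rcases hc with hc | hc <;> linarith
  · rw [sbtw'_rri] at H1
    rw [sbtw'_rir] at H2
    rcases ha with ha | ha <;> linarith
  · rcases sbtw'_rrr.1 H1 with ⟨g1, g2⟩ | ⟨g1, g2⟩ | ⟨g1, g2⟩ <;>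
      rcases sbtw'_rrr.1 H2 with ⟨f1, f2⟩ | ⟨f1, f2⟩ | ⟨f1, f2⟩ <;>
      rcases ha with ha | ha <;> rcases hc with hc | hc <;> linarith

lemma sep_real {x : RP1} {p : ℝ} (h : x ≠ (p : RP1)) :
    ∃ δ : ℝ, 0 < δ ∧ ∃ W ∈ 𝓝 x, ∀ w ∈ W, w ∉ cIoo (p - δ) (p + δ) := by
  induction x using OnePoint.rec with
  | infty =>
    refine ⟨1, one_pos, nbig (|p| + 1), nbig_mem_nhds _, ?_⟩
    intro w hw hmem
    obtain ⟨t, ht1, ht2, rfl⟩ := mem_cIoo hmem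
    rcases mem_nbig hw with h' | ⟨t', ht', h'⟩
    · exact OnePoint.coe_ne_infty t h'
    · rw [OnePoint.coe_eq_coe] at h'
      subst h'
      have := abs_nonneg p; have := le_abs_self p; have := neg_abs_le p
      rcases ht' with g | g <;> linarith
  | coe q =>
    have hqp : q ≠ p := fun e => h (by rw [e])
    have hd : 0 < |q - p| / 2 := by
      have : q - p ≠ 0 := sub_ne_zero.2 hqp
      positivity
    refine ⟨|q - p| / 2, hd, cIoo (q - |q - p| / 2) (q + |q - p| / 2),
      cIoo_mem_nhds (by linarith) (by linarith), ?_⟩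
    intro w hw hmem
    obtain ⟨t, ht1, ht2, rfl⟩ := mem_cIoo hmem
    obtain ⟨t', g1, g2, e⟩ := mem_cIoo hw
    rw [OnePoint.coe_eq_coe] at e
    subst e
    have h1 := abs_sub_abs_le_abs_sub q p
    rcases abs_cases (q - p) with ⟨e1, _⟩ | ⟨e1, _⟩ <;> linarith

lemma sep_inf {x : RP1} (h : x ≠ ∞) :
    ∃ M : ℝ, 0 < M ∧ ∃ W ∈ 𝓝 x, W ⊆ cIoo (-M) M := by
  induction x using OnePoint.rec with
  | infty => exact absurd rfl h
  | coe q =>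
    have h0 : 0 < |q| + 1 := by positivity
    refine ⟨|q| + 1, h0, cIoo (q - 1) (q + 1), cIoo_mem_nhds (by linarith) (by linarith), ?_⟩
    refine cIoo_mono ?_ ?_ <;>
      [skip; skip] <;> [have := neg_abs_le q; have := le_abs_self q] <;> linarith

/-- `[t₁,t₂,t₃,t₄]`: every subtriple in increasing index order is cyclically ordered. -/
def sbtw4 (t₁ t₂ t₃ t₄ : RP1) : Prop :=
  sbtw' t₁ t₂ t₃ ∧ sbtw' t₁ t₂ t₄ ∧ sbtw' t₁ t₃ t₄ ∧ sbtw' t₂ t₃ t₄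

/-- Transitive projective root "ordering": if four continuous functions into `ℝP¹`
are cyclically ordered at a sample point `s` and the cyclically consecutive ones never
meet, then they are cyclically ordered everywhere; in particular `θ₁ ≠ θ₃` and
`θ₂ ≠ θ₄` pointwise. -/
theorem stmt5 {R : Type*} [TopologicalSpace R] [ConnectedSpace R] (s : R)
    (θ₁ θ₂ θ₃ θ₄ : R → RP1)
    (h₁ : Continuous θ₁) (h₂ : Continuous θ₂) (h₃ : Continuous θ₃) (h₄ : Continuous θ₄)
    (hs : sbtw4 (θ₁ s) (θ₂ s) (θ₃ s) (θ₄ s))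
    (h12 : ∀ r, θ₁ r ≠ θ₂ r) (h23 : ∀ r, θ₂ r ≠ θ₃ r)
    (h34 : ∀ r, θ₃ r ≠ θ₄ r) (h41 : ∀ r, θ₄ r ≠ θ₁ r) :
    ∀ r, sbtw4 (θ₁ r) (θ₂ r) (θ₃ r) (θ₄ r) ∧ θ₁ r ≠ θ₃ r ∧ θ₂ r ≠ θ₄ r := by
  set S : Set R := {r | sbtw4 (θ₁ r) (θ₂ r) (θ₃ r) (θ₄ r)} with hS
  have hopen : IsOpen S := by
    rw [isOpen_iff_mem_nhds]
    intro r hr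
    obtain ⟨c1, c2, c3, c4⟩ := hr
    obtain ⟨U1, hU1, V1, hV1, W1, hW1, P1⟩ := sbtw'_stable c1
    obtain ⟨U2, hU2, V2, hV2, W2, hW2, P2⟩ := sbtw'_stable c2
    obtain ⟨U3, hU3, V3, hV3, W3, hW3, P3⟩ := sbtw'_stable c3
    obtain ⟨U4, hU4, V4, hV4, W4, hW4, P4⟩ := sbtw'_stable c4
    filter_upwards [h₁.continuousAt.preimage_mem_nhds (inter_mem (inter_mem hU1 hU2) hU3),
      h₂.continuousAt.preimage_mem_nhds (inter_mem (inter_mem hV1 hV2) hU4),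
      h₃.continuousAt.preimage_mem_nhds (inter_mem (inter_mem hW1 hV3) hV4),
      h₄.continuousAt.preimage_mem_nhds (inter_mem (inter_mem hW2 hW3) hW4)]
      with r' m1 m2 m3 m4
    exact ⟨P1 _ m1.1.1 _ m2.1.1 _ m3.1.1, P2 _ m1.1.2 _ m2.1.2 _ m4.1.1,
      P3 _ m1.2 _ m3.1.2 _ m4.1.2, P4 _ m2.2 _ m3.2 _ m4.2⟩
  have hopenc : IsOpen Sᶜ := by
    rw [isOpen_iff_mem_nhds]
    intro r hr
    by_cases e13 : θ₁ r = θ₃ r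
    · cases h3r : θ₃ r using OnePoint.rec with
      | infty =>
        have hx2 : θ₂ r ≠ ∞ := by rw [← h3r]; exact h23 r
        have hx4 : θ₄ r ≠ ∞ := by rw [← h3r]; exact fun e => h34 r e.symm
        obtain ⟨M2, hM2, W2, hW2, s2⟩ := sep_inf hx2
        obtain ⟨M4, hM4, W4, hW4, s4⟩ := sep_inf hx4
        have e1 : θ₁ r = ∞ := by rw [e13, h3r]
        have hn1 : nbig (max M2 M4) ∈ 𝓝 (θ₁ r) := by rw [e1]; exact nbig_mem_nhds _
        filter_upwards [h₁.continuousAt.preimage_mem_nhds hn1,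
          h₂.continuousAt.preimage_mem_nhds hW2,
          h₃.continuousAt.preimage_mem_nhds (by rw [h3r]; exact nbig_mem_nhds (max M2 M4)),
          h₄.continuousAt.preimage_mem_nhds hW4]
          with r' m1 m2 m3 m4
        intro Hs
        have g2 : θ₂ r' ∈ cIoo (-(max M2 M4)) (max M2 M4) :=
          cIoo_mono (by have := le_max_left M2 M4; linarith) (le_max_left _ _) (s2 m2)
        have g4 : θ₄ r' ∈ cIoo (-(max M2 M4)) (max M2 M4) :=
          cIoo_mono (by have := le_max_right M2 M4; linarith) (le_max_right _ _) (s4 m4)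
        exact key_inf m1 m3 g2 g4 Hs.1 Hs.2.2.1
      | coe p =>
        have hx2 : θ₂ r ≠ (p : RP1) := by rw [← h3r]; exact h23 r
        have hx4 : θ₄ r ≠ (p : RP1) := by rw [← h3r]; exact fun e => h34 r e.symm
        obtain ⟨δ2, hδ2, W2, hW2, s2⟩ := sep_real hx2
        obtain ⟨δ4, hδ4, W4, hW4, s4⟩ := sep_real hx4
        have hδ : 0 < min δ2 δ4 := lt_min hδ2 hδ4
        have e1 : θ₁ r = (p : RP1) := by rw [e13, h3r]
        have hn1 : cIoo (p - min δ2 δ4) (p + min δ2 δ4) ∈ 𝓝 (θ₁ r) := by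
          rw [e1]; exact cIoo_mem_nhds (by linarith) (by linarith)
        have hn3 : cIoo (p - min δ2 δ4) (p + min δ2 δ4) ∈ 𝓝 (θ₃ r) := by
          rw [h3r]; exact cIoo_mem_nhds (by linarith) (by linarith)
        filter_upwards [h₁.continuousAt.preimage_mem_nhds hn1,
          h₂.continuousAt.preimage_mem_nhds hW2,
          h₃.continuousAt.preimage_mem_nhds hn3,
          h₄.continuousAt.preimage_mem_nhds hW4]
          with r' m1 m2 m3 m4
        intro Hs
        have g2 : θ₂ r' ∉ cIoo (p - min δ2 δ4) (p + min δ2 δ4) := fun hm =>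
          s2 _ m2 (cIoo_mono (by linarith [min_le_left δ2 δ4]) (by linarith [min_le_left δ2 δ4]) hm)
        have g4 : θ₄ r' ∉ cIoo (p - min δ2 δ4) (p + min δ2 δ4) := fun hm =>
          s4 _ m4 (cIoo_mono (by linarith [min_le_right δ2 δ4]) (by linarith [min_le_right δ2 δ4]) hm)
        exact key_real m1 m3 g2 g4 Hs.1 Hs.2.2.1
    · by_cases e24 : θ₂ r = θ₄ r
      · cases h4r : θ₄ r using OnePoint.rec with
        | infty =>
          have hx3 : θ₃ r ≠ ∞ := by rw [← h4r]; exact h34 r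
          have hx1 : θ₁ r ≠ ∞ := by rw [← h4r]; exact fun e => h41 r e.symm
          obtain ⟨M3, hM3, W3, hW3, s3⟩ := sep_inf hx3
          obtain ⟨M1, hM1, W1, hW1, s1⟩ := sep_inf hx1
          have e2 : θ₂ r = ∞ := by rw [e24, h4r]
          have hn2 : nbig (max M3 M1) ∈ 𝓝 (θ₂ r) := by rw [e2]; exact nbig_mem_nhds _
          filter_upwards [h₂.continuousAt.preimage_mem_nhds hn2,
            h₃.continuousAt.preimage_mem_nhds hW3,
            h₄.continuousAt.preimage_mem_nhds (by rw [h4r]; exact nbig_mem_nhds (max M3 M1)),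
            h₁.continuousAt.preimage_mem_nhds hW1]
            with r' m2 m3 m4 m1
          intro Hs
          have g3 : θ₃ r' ∈ cIoo (-(max M3 M1)) (max M3 M1) :=
            cIoo_mono (by have := le_max_left M3 M1; linarith) (le_max_left _ _) (s3 m3)
          have g1 : θ₁ r' ∈ cIoo (-(max M3 M1)) (max M3 M1) :=
            cIoo_mono (by have := le_max_right M3 M1; linarith) (le_max_right _ _) (s1 m1)
          exact key_inf m2 m4 g3 g1 Hs.2.2.2 (sbtw'_cyclic Hs.2.1)
        | coe p =>
          have hx3 : θ₃ r ≠ (p : RP1) := by rw [← h4r]; exact h34 r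
          have hx1 : θ₁ r ≠ (p : RP1) := by rw [← h4r]; exact fun e => h41 r e.symm
          obtain ⟨δ3, hδ3, W3, hW3, s3⟩ := sep_real hx3
          obtain ⟨δ1, hδ1, W1, hW1, s1⟩ := sep_real hx1
          have hδ : 0 < min δ3 δ1 := lt_min hδ3 hδ1
          have e2 : θ₂ r = (p : RP1) := by rw [e24, h4r]
          have hn2 : cIoo (p - min δ3 δ1) (p + min δ3 δ1) ∈ 𝓝 (θ₂ r) := by
            rw [e2]; exact cIoo_mem_nhds (by linarith) (by linarith)
          have hn4 : cIoo (p - min δ3 δ1) (p + min δ3 δ1) ∈ 𝓝 (θ₄ r) := by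
            rw [h4r]; exact cIoo_mem_nhds (by linarith) (by linarith)
          filter_upwards [h₂.continuousAt.preimage_mem_nhds hn2,
            h₃.continuousAt.preimage_mem_nhds hW3,
            h₄.continuousAt.preimage_mem_nhds hn4,
            h₁.continuousAt.preimage_mem_nhds hW1]
            with r' m2 m3 m4 m1
          intro Hs
          have g3 : θ₃ r' ∉ cIoo (p - min δ3 δ1) (p + min δ3 δ1) := fun hm =>
            s3 _ m3 (cIoo_mono (by linarith [min_le_left δ3 δ1]) (by linarith [min_le_left δ3 δ1]) hm)
          have g1 : θ₁ r' ∉ cIoo (p - min δ3 δ1) (p + min δ3 δ1) := fun hm =>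
            s1 _ m1 (cIoo_mono (by linarith [min_le_right δ3 δ1]) (by linarith [min_le_right δ3 δ1]) hm)
          exact key_real m2 m4 g3 g1 Hs.2.2.2 (sbtw'_cyclic Hs.2.1)
      · -- all four distinct at r
        have hne : ¬ sbtw' (θ₁ r) (θ₂ r) (θ₃ r) ∨ ¬ sbtw' (θ₁ r) (θ₂ r) (θ₄ r) ∨
            ¬ sbtw' (θ₁ r) (θ₃ r) (θ₄ r) ∨ ¬ sbtw' (θ₂ r) (θ₃ r) (θ₄ r) := by
          by_contra hcon
          push_neg at hcon
          exact hr ⟨hcon.1, hcon.2.1, hcon.2.2.1, hcon.2.2.2⟩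
        have h14 : θ₁ r ≠ θ₄ r := fun e => h41 r e.symm
        rcases hne with hc | hc | hc | hc
        · have rev := (sbtw'_total (h12 r) (h23 r) e13).resolve_left hc
          obtain ⟨U, hU, V, hV, W, hW, P⟩ := sbtw'_stable rev
          filter_upwards [h₁.continuousAt.preimage_mem_nhds hU,
            h₃.continuousAt.preimage_mem_nhds hV,
            h₂.continuousAt.preimage_mem_nhds hW] with r' m1 m3 m2
          exact fun Hs => sbtw'_asymm (P _ m1 _ m3 _ m2) Hs.1
        · have rev := (sbtw'_total (h12 r) e24 h14).resolve_left hc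
          obtain ⟨U, hU, V, hV, W, hW, P⟩ := sbtw'_stable rev
          filter_upwards [h₁.continuousAt.preimage_mem_nhds hU,
            h₄.continuousAt.preimage_mem_nhds hV,
            h₂.continuousAt.preimage_mem_nhds hW] with r' m1 m4 m2
          exact fun Hs => sbtw'_asymm (P _ m1 _ m4 _ m2) Hs.2.1
        · have rev := (sbtw'_total e13 (h34 r) h14).resolve_left hc
          obtain ⟨U, hU, V, hV, W, hW, P⟩ := sbtw'_stable rev
          filter_upwards [h₁.continuousAt.preimage_mem_nhds hU,
            h₄.continuousAt.preimage_mem_nhds hV,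
            h₃.continuousAt.preimage_mem_nhds hW] with r' m1 m4 m3
          exact fun Hs => sbtw'_asymm (P _ m1 _ m4 _ m3) Hs.2.2.1
        · have rev := (sbtw'_total (h23 r) (h34 r) e24).resolve_left hc
          obtain ⟨U, hU, V, hV, W, hW, P⟩ := sbtw'_stable rev
          filter_upwards [h₂.continuousAt.preimage_mem_nhds hU,
            h₄.continuousAt.preimage_mem_nhds hV,
            h₃.continuousAt.preimage_mem_nhds hW] with r' m2 m4 m3
          exact fun Hs => sbtw'_asymm (P _ m2 _ m4 _ m3) Hs.2.2.2
  have hsub : S = Set.univ := by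
    rcases (isClopen_iff.mp ⟨isOpen_compl_iff.mp hopenc, hopen⟩) with h | h
    · have hsS : s ∈ S := hs
      rw [h] at hsS
      exact absurd hsS (Set.notMem_empty s)
    · exact h
  intro r
  have hr : sbtw4 (θ₁ r) (θ₂ r) (θ₃ r) (θ₄ r) := by
    have hrS : r ∈ S := by rw [hsub]; trivial
    exact hrS
  exact ⟨hr, (sbtw'_ne hr.2.2.1).1, (sbtw'_ne hr.2.2.2).2.2⟩
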